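/- Let t̃ ∈ ℝ and H(t) = 2/(3(t − t̃)) for t ≠ t̃. Let P : ℝ → ℝ be three times continuously differentiable, let I be an open interval with t₀ ∈ I, t̃ ∉ I, and let X : I → ℝ be differentiable with H'(t) = −X(t)·P'(X(t)) for all t ∈ I. Assume that at t₀: P(X(t₀)) = 0, X(t₀) ≠ 0, X'(t₀) ≠ 0, P'(X(t₀)) > 0, P'(X(t₀)) + 2X(t₀)·P''(X(t₀)) > 0, and that the sound speed c_s(t) = √(P'(X(t))/(P'(X(t)) + 2X(t)·P''(X(t)))) has vanishing derivative at t₀ (constant sound speed, s = 0). Define Σ(X) = X·P'(X) + 2X²·P''(X) and λ(X) = X²·P''(X) + (2/3)·X³·P'''(X). Then λ(X(t₀))/Σ(X(t₀)) = (1 − c_s(t₀)²)/(6·c_s(t₀)²). -/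

import Mathlib

/-- Model-independent value of λ/Σ in matter bounce cosmology: with `H(t) = 2/(3(t − ttil))`,
the Friedmann equation `H' = −X·P'(X)`, vanishing pressure `P(X(t₀)) = 0` and constant sound
speed (`c_s'(t₀) = 0`), one has `λ/Σ = (1 − c_s²)/(6c_s²)` at `t₀`. -/
theorem lambda_over_Sigma_constant_sound_speed
    (ttil t₀ a b : ℝ)
    (P : ℝ → ℝ) (hP : ContDiff ℝ 3 P)
    (H : ℝ → ℝ) (hH : ∀ t : ℝ, t ≠ ttil → H t = 2 / (3 * (t - ttil)))
    (ht₀ : t₀ ∈ Set.Ioo a b) (httil : ttil ∉ Set.Ioo a b)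
    (X : ℝ → ℝ) (hX : DifferentiableOn ℝ X (Set.Ioo a b))
    (hFried : ∀ t ∈ Set.Ioo a b, deriv H t = -(X t * deriv P (X t)))
    (hp0 : P (X t₀) = 0) (hX0 : X t₀ ≠ 0) (hX' : deriv X t₀ ≠ 0)
    (hP1 : 0 < deriv P (X t₀))
    (hP2 : 0 < deriv P (X t₀) + 2 * X t₀ * deriv (deriv P) (X t₀))
    (cs : ℝ → ℝ)
    (hcs : ∀ t : ℝ, cs t = Real.sqrt (deriv P (X t)
      / (deriv P (X t) + 2 * X t * deriv (deriv P) (X t))))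
    (hconst : deriv cs t₀ = 0)
    (Sig lam : ℝ → ℝ)
    (hSig : ∀ Y, Sig Y = Y * deriv P Y + 2 * Y ^ 2 * deriv (deriv P) Y)
    (hlam : ∀ Y, lam Y = Y ^ 2 * deriv (deriv P) Y
      + (2 / 3) * Y ^ 3 * deriv (deriv (deriv P)) Y) :
    lam (X t₀) / Sig (X t₀) = (1 - (cs t₀) ^ 2) / (6 * (cs t₀) ^ 2) := by
  set Y := X t₀ with hY
  set p1 := deriv P Y with hp1
  set p2 := deriv (deriv P) Y with hp2def
  set p3 := deriv (deriv (deriv P)) Y with hp3def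
  set x' := deriv X t₀ with hx'
  set D := p1 + 2 * Y * p2 with hD
  -- differentiability facts
  have hP2c : ContDiff ℝ 2 (deriv P) := by
    exact (contDiff_succ_iff_deriv.mp (show ContDiff ℝ ((2:ℕ)+1) P from by
      exact_mod_cast hP)).2.2
  have hP1c : ContDiff ℝ 1 (deriv (deriv P)) := by
    exact (contDiff_succ_iff_deriv.mp (show ContDiff ℝ ((1:ℕ)+1) (deriv P) from by
      exact_mod_cast hP2c)).2.2
  have hXder : HasDerivAt X x' t₀ :=
    (hX.differentiableAt (isOpen_Ioo.mem_nhds ht₀)).hasDerivAt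
  have h2 : HasDerivAt (deriv P) p2 Y := (hP2c.differentiable two_ne_zero Y).hasDerivAt
  have h3 : HasDerivAt (deriv (deriv P)) p3 Y :=
    (hP1c.differentiable one_ne_zero Y).hasDerivAt
  -- derivative of numerator and denominator of cs²
  have hnum : HasDerivAt (fun t => deriv P (X t)) (p2 * x') t₀ := h2.comp t₀ hXder
  have hden : HasDerivAt (fun t => deriv P (X t) + 2 * X t * deriv (deriv P) (X t))
      (p2 * x' + (2 * x' * p2 + 2 * Y * (p3 * x'))) t₀ :=
    hnum.add ((hXder.const_mul 2).mul (h3.comp t₀ hXder))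
  have hD0 : D ≠ 0 := ne_of_gt hP2
  have hfrac : HasDerivAt
      (fun t => deriv P (X t) / (deriv P (X t) + 2 * X t * deriv (deriv P) (X t)))
      ((p2 * x' * D - p1 * (p2 * x' + (2 * x' * p2 + 2 * Y * (p3 * x')))) / D ^ 2) t₀ :=
    hnum.div hden hD0
  have hg_pos : 0 < p1 / D := div_pos hP1 hP2
  have hsqrt : HasDerivAt cs
      (1 / (2 * Real.sqrt (p1 / D)) *
        ((p2 * x' * D - p1 * (p2 * x' + (2 * x' * p2 + 2 * Y * (p3 * x')))) / D ^ 2)) t₀ := by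
    have : cs = fun t => Real.sqrt (deriv P (X t)
        / (deriv P (X t) + 2 * X t * deriv (deriv P) (X t))) := funext hcs
    rw [this]
    exact (Real.hasDerivAt_sqrt (ne_of_gt hg_pos)).comp t₀ hfrac
  have hsqrt_pos : 0 < Real.sqrt (p1 / D) := Real.sqrt_pos.mpr hg_pos
  -- the key relation from constant sound speed
  have hq : (p2 * x' * D - p1 * (p2 * x' + (2 * x' * p2 + 2 * Y * (p3 * x')))) / D ^ 2 = 0 := by
    have h0 := hsqrt.deriv
    rw [hconst] at h0
    have hne : 1 / (2 * Real.sqrt (p1 / D)) ≠ 0 := by positivity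
    exact (mul_eq_zero.mp h0.symm).resolve_left hne
  have hkey : p2 * D = p1 * (3 * p2 + 2 * Y * p3) := by
    have h1 : p2 * x' * D - p1 * (p2 * x' + (2 * x' * p2 + 2 * Y * (p3 * x'))) = 0 := by
      field_simp at hq
      linarith [hq]
    have h2 : x' * (p2 * D - p1 * (3 * p2 + 2 * Y * p3)) = 0 := by ring_nf; ring_nf at h1; linarith
    have := (mul_eq_zero.mp h2).resolve_left hX'
    linarith
  -- value of cs²
  have hcssq : (cs t₀) ^ 2 = p1 / D := by
    rw [hcs t₀]
    exact Real.sq_sqrt (le_of_lt hg_pos)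
  -- final algebra
  rw [hlam, hSig, hcssq]
  rw [← hp1, ← hp2def, ← hp3def]
  have hp1ne : p1 ≠ 0 := ne_of_gt hP1
  have hSigne : Y * p1 + 2 * Y ^ 2 * p2 ≠ 0 := by
    have : Y * p1 + 2 * Y ^ 2 * p2 = Y * D := by rw [hD]; ring
    rw [this]
    exact mul_ne_zero hX0 hD0
  have hD0' : p1 + 2 * Y * p2 ≠ 0 := hD0
  have hD0'' : p1 + Y * p2 * 2 ≠ 0 := by rw [mul_right_comm, mul_comm Y]; exact hD0'
  rw [hD] at hkey ⊢
  field_simp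
  ring_nf
  ring_nf at hkey
  linear_combination (-6 * Y) * hkey
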